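/- Let $f$ be a nonnegative $C^2$ function on a neighborhood $U$ of the origin in $\mathbb{R}^n$ with $f(0)=0$, satisfying the Lojasiewicz inequality $|\nabla f(x)|\geq C|f(x)|^{\alpha}$ on $U$ for some $C>0$ and $\alpha\in(1/2,1)$. Then there is a neighborhood $V\subset U$ of the origin such that for any $x_0\in V$, the downward gradient flow $\dot x(t)=-\nabla f(x(t))$, $x(0)=x_0$, exists for all $t\geq 0$, stays in $U$, and converges to a limit $x_\infty\in U$ with $f(x_\infty)=0$; moreover $f(x(t))\leq C' t^{-1/(2\alpha-1)}$ and $d(x(t),x_\infty)\leq C' t^{-(1-\alpha)/(2\alpha-1)}$ for suitable $C'>0$. -/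

import Mathlib

open Filter Set Metric Real

section flow
variable {E : Type*} [NormedAddCommGroup E] [NormedSpace ℝ E] [CompleteSpace E]

lemma exists_global_flow (v : E → E) (K : NNReal) (hL : LipschitzWith K v)
    (M : ℝ) (hM : ∀ x, ‖v x‖ ≤ M) (x₀ : E) :
    ∃ X : ℝ → E, X 0 = x₀ ∧ ∀ t, HasDerivAt X (v (X t)) t := by
  have hM0 : 0 ≤ M := le_trans (norm_nonneg _) (hM x₀)
  have H : ∀ N : ℕ, ∃ f : ℝ → E, f 0 = x₀ ∧ ∀ t ∈ Icc (-((N:ℝ)+1)) ((N:ℝ)+1),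
      HasDerivWithinAt f (v (f t)) (Icc (-((N:ℝ)+1)) ((N:ℝ)+1)) t := by
    intro N
    have hpl : IsPicardLindelof (fun _ x => v x) (tmin := -((N:ℝ)+1)) (tmax := (N:ℝ)+1)
        ⟨0, neg_nonpos.2 (by positivity), by positivity⟩ x₀
        ⟨M * ((N:ℝ)+1), by positivity⟩ 0 ⟨M, hM0⟩ K := by
      constructor
      · exact fun t _ => hL.lipschitzOnWith
      · exact fun x _ => continuousOn_const
      · exact fun t _ x _ => hM x
      · simp
        exact le_rfl
    exact hpl.exists_eq_forall_mem_Icc_hasDerivWithinAt₀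
  choose Xs h0 hd using H
  have hdAt : ∀ N : ℕ, ∀ t : ℝ, |t| < (N:ℝ)+1 → HasDerivAt (Xs N) (v (Xs N t)) t := by
    intro N t ht
    rw [abs_lt] at ht
    exact (hd N t ⟨ht.1.le, ht.2.le⟩).hasDerivAt (Icc_mem_nhds ht.1 ht.2)
  have key : ∀ N M : ℕ, ∀ t : ℝ, |t| < (N:ℝ)+1 → |t| < (M:ℝ)+1 → Xs N t = Xs M t := by
    intro N M t htN htM
    set b : ℝ := min ((N:ℝ)+1) ((M:ℝ)+1) with hbdef
    have hb : 0 < b := lt_min (by positivity) (by positivity)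
    have habs : ∀ s : ℝ, s ∈ Ioo (-b) b → |s| < (N:ℝ)+1 ∧ |s| < (M:ℝ)+1 := by
      intro s hs
      have : |s| < b := abs_lt.2 ⟨hs.1, hs.2⟩
      exact ⟨lt_of_lt_of_le this (min_le_left _ _), lt_of_lt_of_le this (min_le_right _ _)⟩
    have htmem : t ∈ Ioo (-b) b := by
      have : |t| < b := lt_min htN htM
      exact ⟨(abs_lt.1 this).1, (abs_lt.1 this).2⟩
    have := ODE_solution_unique_of_mem_Ioo (v := fun _ x => v x)
      (s := fun _ => (univ : Set E)) (K := K)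
      (fun t _ => hL.lipschitzOnWith) (t₀ := 0) (a := -b) (b := b)
      ⟨neg_lt_zero.2 hb, hb⟩
      (f := Xs N) (g := Xs M)
      (fun s hs => ⟨hdAt N s (habs s hs).1, trivial⟩)
      (fun s hs => ⟨hdAt M s (habs s hs).2, trivial⟩)
      (by rw [h0, h0])
    exact this htmem
  refine ⟨fun t => Xs ⌈|t|⌉₊ t, by simpa using h0 0, ?_⟩
  intro t
  set N := ⌈|t|⌉₊ with hN
  have habs : ∀ s : ℝ, |s| < (⌈|s|⌉₊ : ℝ) + 1 := fun s =>
    lt_of_le_of_lt (Nat.le_ceil _) (by exact_mod_cast lt_add_one _)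
  have hopen : IsOpen {s : ℝ | |s| < (N:ℝ)+1} := isOpen_lt continuous_abs continuous_const
  have heq : (fun s => Xs ⌈|s|⌉₊ s) =ᶠ[nhds t] Xs N := by
    filter_upwards [hopen.mem_nhds (habs t)] with s hs
    exact key _ N s (habs s) hs
  exact (hdAt N t (habs t)).congr_of_eventuallyEq heq

omit [CompleteSpace E] in
lemma flow_eq_const_of_zero (v : E → E) (K : NNReal) (hL : LipschitzWith K v)
    {X : ℝ → E} (hX : ∀ t, HasDerivAt X (v (X t)) t) (c : ℝ) (hv0 : v (X c) = 0) :
    ∀ t, X t = X c := by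
  intro t
  have hg : ∀ s : ℝ, HasDerivAt (fun _ : ℝ => X c) (v (X c)) s := by
    intro s; rw [hv0]; exact hasDerivAt_const _ _
  have hc : c ∈ Ioo (min c t - 1) (max c t + 1) := by
    constructor <;> nlinarith [min_le_left c t, le_max_left c t]
  have htm : t ∈ Ioo (min c t - 1) (max c t + 1) := by
    constructor <;> nlinarith [min_le_right c t, le_max_right c t]
  have := ODE_solution_unique_of_mem_Ioo (v := fun _ x => v x)
    (s := fun _ => (univ : Set E)) (K := K)
    (fun _ _ => hL.lipschitzOnWith) hc (f := X) (g := fun _ => X c)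
    (fun s _ => ⟨hX s, trivial⟩) (fun s _ => ⟨hg s, trivial⟩) rfl
  exact this htm

end flow

set_option maxHeartbeats 1000000 in
/-- **Convergence of the gradient flow under a Lojasiewicz inequality.**  Let `f` be a
nonnegative `C²` function on a neighborhood `U` of the origin of `ℝⁿ` with `f 0 = 0`,
satisfying `‖∇f x‖ ≥ C * (f x) ^ α` on `U` with `C > 0` and `α ∈ (1/2, 1)`.  Then there is a
neighborhood `V ⊆ U` of the origin such that for every `x₀ ∈ V` the downward gradient flow
`ẋ = -∇f(x)`, `x 0 = x₀`, exists for all `t ≥ 0`, stays in `U`, and converges to a limit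
`xlim ∈ U` with `f xlim = 0`, with the polynomial rates
`f (x t) ≤ C' t^(-1/(2α-1))` and `dist (x t) xlim ≤ C' t^(-(1-α)/(2α-1))`. -/
theorem stmt_1 (n : ℕ) (U : Set (EuclideanSpace ℝ (Fin n)))
    (hU : U ∈ nhds (0 : EuclideanSpace ℝ (Fin n)))
    (f : EuclideanSpace ℝ (Fin n) → ℝ)
    (hC2 : ContDiffOn ℝ 2 f U)
    (hnonneg : ∀ x ∈ U, 0 ≤ f x) (hf0 : f 0 = 0)
    (C α : ℝ) (hC : 0 < C) (hα : α ∈ Set.Ioo (1/2 : ℝ) 1)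
    (hloja : ∀ x ∈ U, C * (f x) ^ α ≤ ‖gradient f x‖) :
    ∃ V ∈ nhds (0 : EuclideanSpace ℝ (Fin n)), V ⊆ U ∧
      ∀ x₀ ∈ V, ∃ x : ℝ → EuclideanSpace ℝ (Fin n), x 0 = x₀ ∧
        (∀ t : ℝ, 0 ≤ t → x t ∈ U ∧ HasDerivAt x (-(gradient f (x t))) t) ∧
        ∃ xlim ∈ U, f xlim = 0 ∧ Tendsto x atTop (nhds xlim) ∧
          ∃ C' > (0 : ℝ), ∀ t : ℝ, 0 < t →
            f (x t) ≤ C' * t ^ (-(1/(2*α-1))) ∧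
            dist (x t) xlim ≤ C' * t ^ (-((1-α)/(2*α-1))) := by
  classical
  obtain ⟨hα1, hα2⟩ := hα
  have h2α : 0 < 2*α - 1 := by linarith
  have h1α : 0 < 1 - α := by linarith
  have hα0 : 0 < α := by linarith
  have hUo_open : IsOpen (interior U) := isOpen_interior
  have hUoU : interior U ⊆ U := interior_subset
  obtain ⟨R, hR0, hRU⟩ : ∃ R > 0, closedBall (0 : EuclideanSpace ℝ (Fin n)) R ⊆ interior U := by
    obtain ⟨ε, hε, h⟩ := Metric.mem_nhds_iff.1 (interior_mem_nhds.2 hU)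
    exact ⟨ε/2, by positivity, (closedBall_subset_ball (by linarith)).trans h⟩
  -- differentiability facts
  have hnhds : ∀ x ∈ interior U, U ∈ nhds x := fun x hx =>
    mem_nhds_iff.2 ⟨interior U, hUoU, hUo_open, hx⟩
  have hdiff : ∀ x ∈ interior U, DifferentiableAt ℝ f x := fun x hx =>
    (hC2.differentiableOn (by norm_num)).differentiableAt (hnhds x hx)
  have hinner : ∀ x y : EuclideanSpace ℝ (Fin n), fderiv ℝ f x y = inner ℝ (gradient f x) y := by
    intro x y
    rw [gradient, InnerProductSpace.toDual_symm_apply]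
  have hg1 : ContDiffOn ℝ 1 (gradient f) (interior U) := by
    have hd1 : ContDiffOn ℝ 1 (fderiv ℝ f) (interior U) :=
      ContDiffOn.fderiv_of_isOpen (m := 1) (hC2.mono hUoU) hUo_open (by norm_num)
    have hiso : ContDiff ℝ 1 (fun y : (EuclideanSpace ℝ (Fin n) →L[ℝ] ℝ) =>
        (InnerProductSpace.toDual ℝ (EuclideanSpace ℝ (Fin n))).symm y) :=
      (InnerProductSpace.toDual ℝ (EuclideanSpace ℝ (Fin n))).symm.contDiff
    exact hiso.comp_contDiffOn hd1
  have hgcont : ContinuousOn (gradient f) (interior U) := hg1.continuousOn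
  have hgzero : ∀ x ∈ interior U, f x = 0 → gradient f x = 0 := by
    intro x hx hfx
    have hmin : IsLocalMin f x := by
      filter_upwards [hnhds x hx] with y hy
      rw [hfx]; exact hnonneg y hy
    rw [gradient, hmin.fderiv_eq_zero, map_zero]
  -- the bump and the vector field
  set χ : ContDiffBump (0 : EuclideanSpace ℝ (Fin n)) := ⟨R/2, R, by positivity, by linarith⟩
    with hχ
  set v : EuclideanSpace ℝ (Fin n) → EuclideanSpace ℝ (Fin n) :=
    fun x => -(χ x • gradient f x) with hv
  have hv_eq : ∀ x : EuclideanSpace ℝ (Fin n), ‖x‖ ≤ R/2 → v x = -(gradient f x) := by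
    intro x hx
    show -(χ x • gradient f x) = _
    rw [χ.one_of_mem_closedBall (mem_closedBall_zero_iff.2 hx), one_smul]
  have hv_zero : ∀ y : EuclideanSpace ℝ (Fin n), y ∉ closedBall (0:EuclideanSpace ℝ (Fin n)) R →
      v y = 0 := by
    intro y hy
    have hRy : R < ‖y‖ := lt_of_not_ge (fun h => hy (mem_closedBall_zero_iff.2 h))
    have hχy : χ y = 0 := χ.zero_of_le_dist (by rw [dist_zero_right]; exact hRy.le)
    show -(χ y • gradient f y) = 0
    rw [hχy, zero_smul, neg_zero]
  have hv1 : ContDiff ℝ 1 v := by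
    rw [contDiff_iff_contDiffAt]
    intro x
    by_cases hx : x ∈ interior U
    · exact ((χ.contDiffAt.smul (hg1.contDiffAt (hUo_open.mem_nhds hx))).neg)
    · have hxR : x ∉ closedBall (0:EuclideanSpace ℝ (Fin n)) R := fun h => hx (hRU h)
      have hopen : IsOpen ((closedBall (0:EuclideanSpace ℝ (Fin n)) R)ᶜ) :=
        (isClosed_closedBall).isOpen_compl
      have hev : v =ᶠ[nhds x] (fun _ => (0:EuclideanSpace ℝ (Fin n))) := by
        filter_upwards [hopen.mem_nhds hxR] with y hy
        exact hv_zero y hy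
      exact (contDiffAt_const (c := (0:EuclideanSpace ℝ (Fin n)))).congr_of_eventuallyEq hev
  have hvcs : HasCompactSupport v :=
    HasCompactSupport.intro (isCompact_closedBall _ _) hv_zero
  obtain ⟨K, hK⟩ : ∃ K : NNReal, LipschitzWith K v :=
    hv1.lipschitzWith_of_hasCompactSupport hvcs (by norm_num)
  obtain ⟨M, hM⟩ : ∃ M, ∀ x, ‖v x‖ ≤ M := hvcs.exists_bound_of_continuous hv1.continuous
  -- choice of δ
  have hf8 : (0:ℝ) < C*(1-α)*(R/8) := by positivity
  have hcont0 : ContinuousAt (fun x : EuclideanSpace ℝ (Fin n) => (f x) ^ (1-α)) 0 := by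
    have hfc : ContinuousAt f 0 := hC2.continuousOn.continuousAt hU
    exact (Real.continuousAt_rpow_const (f 0) (1-α) (Or.inr h1α.le)).comp hfc
  obtain ⟨δ, hδ0, hδR, hδf⟩ : ∃ δ > (0:ℝ), δ ≤ R/8 ∧
      ∀ x : EuclideanSpace ℝ (Fin n), ‖x‖ < δ → (f x)^(1-α) < C*(1-α)*(R/8) := by
    have h0v : (f (0:EuclideanSpace ℝ (Fin n)))^(1-α) < C*(1-α)*(R/8) := by
      rw [hf0, Real.zero_rpow (ne_of_gt h1α)]; exact hf8
    have hev := hcont0 (Iio_mem_nhds h0v)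
    obtain ⟨ε, hε0, hε⟩ := Metric.mem_nhds_iff.1 hev
    refine ⟨min (ε/2) (R/8), lt_min (by positivity) (by positivity), min_le_right _ _, ?_⟩
    intro x hx
    have : x ∈ ball (0:EuclideanSpace ℝ (Fin n)) ε := by
      rw [mem_ball_zero_iff]
      exact lt_of_lt_of_le hx ((min_le_left _ _).trans (by linarith))
    exact hε this
  refine ⟨ball 0 δ, ball_mem_nhds _ hδ0, ?_, ?_⟩
  · intro y hy
    apply hUoU; apply hRU
    rw [mem_ball_zero_iff] at hy
    rw [mem_closedBall_zero_iff]
    linarith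
  intro x₀ hx₀
  rw [mem_ball_zero_iff] at hx₀
  obtain ⟨X, hX0, hX⟩ := exists_global_flow v K hK M hM x₀
  have hXcont : Continuous X := continuous_iff_continuousAt.2 fun t => (hX t).continuousAt
  set F : ℝ → ℝ := fun t => f (X t) with hFdef
  set G : ℝ → ℝ := fun t => ‖gradient f (X t)‖ with hGdef
  have hmemo : ∀ t : ℝ, ‖X t‖ ≤ R/2 → X t ∈ interior U := fun t ht =>
    hRU (mem_closedBall_zero_iff.2 (by linarith))
  have hmemU : ∀ t : ℝ, ‖X t‖ ≤ R/2 → X t ∈ U := fun t ht => hUoU (hmemo t ht)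
  have hFnn : ∀ t : ℝ, ‖X t‖ ≤ R/2 → 0 ≤ F t := fun t ht => hnonneg _ (hmemU t ht)
  have hloja' : ∀ t : ℝ, ‖X t‖ ≤ R/2 → C * (F t)^α ≤ G t := fun t ht =>
    hloja _ (hmemU t ht)
  have hFcontAt : ∀ t : ℝ, ‖X t‖ ≤ R/2 → ContinuousAt F t := fun t ht =>
    (hC2.continuousOn.continuousAt (hnhds _ (hmemo t ht))).comp hXcont.continuousAt
  have hFderiv : ∀ t : ℝ, ‖X t‖ ≤ R/2 → HasDerivAt F (-(G t)^2) t := by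
    intro t ht
    have h1 := ((hdiff _ (hmemo t ht)).hasFDerivAt).comp_hasDerivAt t (hX t)
    have h2 : fderiv ℝ f (X t) (v (X t)) = -(G t)^2 := by
      rw [hv_eq _ ht, hinner, inner_neg_right, real_inner_self_eq_norm_sq, hGdef]
    rw [h2] at h1
    exact h1
  -- monotonicity of F
  have hmono : ∀ a b : ℝ, a ≤ b → (∀ u ∈ Icc a b, ‖X u‖ ≤ R/2) →
      ∀ s s' : ℝ, s ∈ Icc a b → s' ∈ Icc a b → s ≤ s' → F s' ≤ F s := by
    intro a b hab hreg
    have hanti : AntitoneOn F (Icc a b) := by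
      apply antitoneOn_of_deriv_nonpos (convex_Icc a b)
      · exact fun u hu => (hFcontAt u (hreg u hu)).continuousWithinAt
      · intro u hu
        rw [interior_Icc] at hu
        exact ((hFderiv u (hreg u (Ioo_subset_Icc_self hu))).differentiableAt).differentiableWithinAt
      · intro u hu
        rw [interior_Icc] at hu
        rw [(hFderiv u (hreg u (Ioo_subset_Icc_self hu))).deriv]
        exact neg_nonpos.2 (sq_nonneg _)
    exact fun s s' hs hs' hss' => hanti hs hs' hss'
  -- once F hits zero the flow is constant
  have hconstz : ∀ c : ℝ, ‖X c‖ ≤ R/2 → F c = 0 → ∀ t, X t = X c := by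
    intro c hc hFc
    have hgz : gradient f (X c) = 0 := hgzero _ (hmemo c hc) hFc
    have hvz : v (X c) = 0 := by
      show -(χ (X c) • gradient f (X c)) = 0
      rw [hgz, smul_zero, neg_zero]
    exact flow_eq_const_of_zero v K hK hX c hvz
  -- length estimate
  have hdist : ∀ a b : ℝ, a ≤ b → (∀ u ∈ Icc a b, ‖X u‖ ≤ R/2) →
      (∀ u ∈ Ico a b, 0 < F u) → ∀ s ∈ Icc a b,
      ‖X s - X a‖ ≤ ((F a)^(1-α) - (F s)^(1-α)) / (C*(1-α)) := by
    intro a b hab hreg hpos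
    set B : ℝ → ℝ := fun u => ((F a)^(1-α) - (F u)^(1-α)) / (C*(1-α)) with hBdef
    have hψc : ContinuousOn (fun u => (F u)^(1-α)) (Icc a b) := fun u hu =>
      ((Real.continuousAt_rpow_const (F u) (1-α) (Or.inr h1α.le)).comp
        (hFcontAt u (hreg u hu))).continuousWithinAt
    have hBc : ContinuousOn B (Icc a b) := (continuousOn_const.sub hψc).div_const _
    have hBd : ∀ u ∈ Ico a b, HasDerivAt B ((G u)^2 * ((F u)^(-α)) / C) u := by
      intro u hu
      have hFu : 0 < F u := hpos u hu
      have hψd : HasDerivAt (fun u => (F u)^(1-α))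
          ((-(G u)^2) * (1-α) * (F u)^(1-α-1)) u :=
        (hFderiv u (hreg u (Ico_subset_Icc_self hu))).rpow_const (Or.inl (ne_of_gt hFu))
      have hd := ((hasDerivAt_const u ((F a)^(1-α))).sub hψd).div_const (C*(1-α))
      refine hd.congr_deriv ?_
      have e1 : (1 - α - 1 : ℝ) = -α := by ring
      rw [e1]
      field_simp
      ring
    have key := image_norm_le_of_norm_deriv_right_le_deriv_boundary'
      (f := fun u => X u - X a) (f' := fun u => v (X u)) (a := a) (b := b)
      ((hXcont.sub continuous_const).continuousOn)
      (fun u _ => ((hX u).sub_const (X a)).hasDerivWithinAt)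
      (B := B) (B' := fun u => (G u)^2 * ((F u)^(-α)) / C)
      (by simp [hBdef]) hBc
      (fun u hu => (hBd u hu).hasDerivWithinAt)
      ?_
    · intro s hs
      exact key hs
    · intro u hu
      have hFu : 0 < F u := hpos u hu
      have hur : ‖X u‖ ≤ R/2 := hreg u (Ico_subset_Icc_self hu)
      have hlo := hloja' u hur
      have hFα : 0 < (F u)^α := Real.rpow_pos_of_pos hFu α
      have hGpos : 0 < G u := lt_of_lt_of_le (by positivity) hlo
      have hnorm : ‖v (X u)‖ = G u := by
        rw [hv_eq _ hur, norm_neg, hGdef]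
      show ‖v (X u)‖ ≤ G u ^ 2 * F u ^ (-α) / C
      rw [hnorm, Real.rpow_neg hFu.le, le_div_iff₀ hC]
      have h1 : G u * (C * (F u)^α) ≤ G u * G u :=
        mul_le_mul_of_nonneg_left hlo hGpos.le
      have h2 : ((F u)^α)⁻¹ * (F u)^α = 1 := inv_mul_cancel₀ (ne_of_gt hFα)
      nlinarith [mul_le_mul_of_nonneg_right h1 (le_of_lt (inv_pos.2 hFα))]
  -- decay estimate
  have hrate : ∀ a b : ℝ, a ≤ b → (∀ u ∈ Icc a b, ‖X u‖ ≤ R/2) → 0 < F b →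
      (F a)^(1-2*α) + C^2*(2*α-1)*(b-a) ≤ (F b)^(1-2*α) := by
    intro a b hab hreg hFb
    have hposIcc : ∀ u ∈ Icc a b, 0 < F u := fun u hu =>
      lt_of_lt_of_le hFb (hmono a b hab hreg u b hu ⟨hab, le_refl b⟩ hu.2)
    have hφd : ∀ u ∈ Ioo a b, HasDerivAt (fun w => (F w)^(1-2*α))
        ((-(G u)^2) * (1-2*α) * (F u)^(1-2*α-1)) u :=
      fun u hu => (hFderiv u (hreg u (Ioo_subset_Icc_self hu))).rpow_const
        (Or.inl (ne_of_gt (hposIcc u (Ioo_subset_Icc_self hu))))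
    have hφc : ContinuousOn (fun w => (F w)^(1-2*α)) (Icc a b) := fun u hu =>
      ((Real.continuousAt_rpow_const (F u) _ (Or.inl (ne_of_gt (hposIcc u hu)))).comp
        (hFcontAt u (hreg u hu))).continuousWithinAt
    have hbound : ∀ u ∈ interior (Icc a b),
        C^2*(2*α-1) ≤ deriv (fun w => (F w)^(1-2*α)) u := by
      intro u hu
      rw [interior_Icc] at hu
      rw [(hφd u hu).deriv]
      have hFu : 0 < F u := hposIcc u (Ioo_subset_Icc_self hu)
      have hur : ‖X u‖ ≤ R/2 := hreg u (Ioo_subset_Icc_self hu)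
      have hlo := hloja' u hur
      have hFα : 0 < (F u)^α := Real.rpow_pos_of_pos hFu α
      have hGpos : 0 < G u := lt_of_lt_of_le (by positivity) hlo
      have e1 : (1 - 2*α - 1 : ℝ) = -(α + α) := by ring
      rw [e1, Real.rpow_neg hFu.le, Real.rpow_add hFu]
      have h2 : ((F u)^α * (F u)^α)⁻¹ * ((F u)^α * (F u)^α) = 1 :=
        inv_mul_cancel₀ (by positivity)
      have h3 : (C * (F u)^α) * (C * (F u)^α) ≤ G u * G u :=
        mul_le_mul hlo hlo (by positivity) hGpos.le
      have hq : (0:ℝ) < ((F u)^α * (F u)^α)⁻¹ := inv_pos.2 (mul_pos hFα hFα)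
      have h6 := mul_le_mul_of_nonneg_right h3 hq.le
      have h7 : (C * (F u)^α) * (C * (F u)^α) * ((F u)^α * (F u)^α)⁻¹ = C^2 := by
        field_simp
      rw [h7] at h6
      nlinarith [mul_le_mul_of_nonneg_left h6 h2α.le]
    have hmain := Convex.mul_sub_le_image_sub_of_le_deriv (convex_Icc a b) hφc
      (fun u hu => by
        rw [interior_Icc] at hu
        exact (hφd u hu).differentiableAt.differentiableWithinAt)
      hbound a ⟨le_refl a, hab⟩ b ⟨hab, le_refl b⟩ hab
    linarith [hmain]
  -- numeric consequence of the choice of δ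
  have hF0δ : (F 0)^(1-α) < C*(1-α)*(R/8) := by
    have : F 0 = f x₀ := by rw [hFdef]; simp only; rw [hX0]
    rw [this]
    exact hδf x₀ hx₀
  have hnum : ∀ w : ℝ, 0 ≤ w → ((F 0)^(1-α) - w)/(C*(1-α)) < R/8 := by
    intro w hw
    rw [div_lt_iff₀ (by positivity)]
    nlinarith [hF0δ]
  -- a priori estimate
  have hapr : ∀ T : ℝ, 0 ≤ T → (∀ u ∈ Icc 0 T, ‖X u‖ ≤ R/2) →
      ∀ s ∈ Icc 0 T, ‖X s‖ < R/4 := by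
    intro T hT hreg s hs
    have hregs : ∀ u ∈ Icc 0 s, ‖X u‖ ≤ R/2 := fun u hu =>
      hreg u ⟨hu.1, hu.2.trans hs.2⟩
    have hkey : ‖X s - X 0‖ < R/8 := by
      by_cases hz : ∃ u ∈ Ico 0 s, F u = 0
      · obtain ⟨u₁, hu₁, hFu₁⟩ := hz
        set Z : Set ℝ := {u | u ∈ Icc 0 s ∧ F u = 0} with hZdef
        have hZne : Z.Nonempty := ⟨u₁, ⟨hu₁.1, hu₁.2.le⟩, hFu₁⟩
        have hZbdd : BddBelow Z := ⟨0, fun z hz => hz.1.1⟩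
        set T₀ : ℝ := sInf Z with hT₀def
        have hT₀mem : T₀ ∈ Icc 0 s :=
          ⟨le_csInf hZne fun z hz => hz.1.1,
           (csInf_le hZbdd ⟨⟨hu₁.1, hu₁.2.le⟩, hFu₁⟩).trans hu₁.2.le⟩
        have hFT₀ : F T₀ = 0 := by
          have hc : ContinuousAt F T₀ := hFcontAt T₀ (hregs T₀ hT₀mem)
          by_contra hne
          have hev : ∀ᶠ w in nhds T₀, F w ≠ 0 := hc.eventually_ne hne
          have hcl : T₀ ∈ closure Z := csInf_mem_closure hZne hZbdd
          rw [mem_closure_iff_nhds] at hcl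
          obtain ⟨w, hw1, hw2⟩ := hcl _ hev
          exact hw1 hw2.2
        have hpos0 : ∀ u ∈ Ico 0 T₀, 0 < F u := by
          intro u hu
          have huIcc : u ∈ Icc 0 s := ⟨hu.1, hu.2.le.trans hT₀mem.2⟩
          refine lt_of_le_of_ne (hFnn u (hregs u huIcc)) fun h => ?_
          exact absurd (csInf_le hZbdd ⟨huIcc, h.symm⟩) (not_le.2 hu.2)
        have hXs : X s = X T₀ := by
          have h1 := hconstz T₀ (hregs T₀ hT₀mem) hFT₀
          rw [h1 s]
        have h2 := hdist 0 T₀ hT₀mem.1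
          (fun u hu => hregs u ⟨hu.1, hu.2.trans hT₀mem.2⟩) hpos0 T₀
          ⟨hT₀mem.1, le_refl T₀⟩
        rw [hXs]
        exact lt_of_le_of_lt h2
          (hnum _ (Real.rpow_nonneg (hFnn T₀ (hregs T₀ hT₀mem)) _))
      · push_neg at hz
        have hpos : ∀ u ∈ Ico 0 s, 0 < F u := fun u hu =>
          lt_of_le_of_ne (hFnn u (hregs u ⟨hu.1, hu.2.le⟩)) (Ne.symm (hz u hu))
        have h2 := hdist 0 s hs.1 hregs hpos s ⟨hs.1, le_refl s⟩
        exact lt_of_le_of_lt h2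
          (hnum _ (Real.rpow_nonneg (hFnn s (hregs s ⟨hs.1, le_refl s⟩)) _))
    have h8 : ‖X s‖ ≤ ‖X s - X 0‖ + ‖X 0‖ := by
      have := norm_add_le (X s - X 0) (X 0)
      simpa using this
    rw [hX0] at h8 hkey
    have : ‖x₀‖ < R/8 := lt_of_lt_of_le hx₀ hδR
    linarith
  -- global invariance
  have hstay : ∀ t : ℝ, 0 ≤ t → ‖X t‖ < R/4 := by
    by_contra hcon
    push_neg at hcon
    obtain ⟨t₁, ht₁0, ht₁⟩ := hcon
    set bad : Set ℝ := {t | 0 ≤ t ∧ R/4 ≤ ‖X t‖} with hbaddef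
    have hbdne : bad.Nonempty := ⟨t₁, ht₁0, ht₁⟩
    have hbdd : BddBelow bad := ⟨0, fun z hz => hz.1⟩
    have hclosed : IsClosed bad :=
      (isClosed_le continuous_const continuous_id).inter
        (isClosed_le continuous_const hXcont.norm)
    set T := sInf bad with hTdef
    have hTmem : T ∈ bad := hclosed.csInf_mem hbdne hbdd
    have hT0 : 0 ≤ T := hTmem.1
    have hsmall : ∀ u : ℝ, 0 ≤ u → u < T → ‖X u‖ < R/4 := by
      intro u hu0 huT
      by_contra h
      push_neg at h
      exact absurd (csInf_le hbdd ⟨hu0, h⟩) (not_le.2 huT)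
    have hTle : ‖X T‖ ≤ R/4 := by
      rcases eq_or_lt_of_le hT0 with h0 | h0
      · rw [← h0, hX0]
        linarith [lt_of_lt_of_le hx₀ hδR]
      · have htd : Tendsto (fun u => ‖X u‖) (nhdsWithin T (Iio T)) (nhds ‖X T‖) :=
          (hXcont.norm.continuousAt).continuousWithinAt
        apply le_of_tendsto htd
        filter_upwards [Ioo_mem_nhdsLT_of_mem (⟨h0, le_refl T⟩ : T ∈ Ioc 0 T)] with u hu
        exact (hsmall u hu.1.le hu.2).le
    have hreg : ∀ u ∈ Icc 0 T, ‖X u‖ ≤ R/2 := by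
      intro u hu
      rcases eq_or_lt_of_le hu.2 with he | hlt
      · rw [he]; linarith
      · linarith [hsmall u hu.1 hlt]
    have := hapr T hT0 hreg T ⟨hT0, le_refl T⟩
    linarith [hTmem.2]
  have hreg2 : ∀ t : ℝ, 0 ≤ t → ‖X t‖ ≤ R/2 := fun t ht =>
    le_trans (hstay t ht).le (by linarith)
  -- the flow satisfies the required ODE and stays in U
  refine ⟨X, hX0, ?_, ?_⟩
  · intro t ht
    refine ⟨hmemU t (hreg2 t ht), ?_⟩
    have h1 := hX t
    rwa [hv_eq _ (hreg2 t ht)] at h1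
  -- the decay rate for F
  have hexp : (1/(1-2*α) : ℝ) = -(1/(2*α-1)) := by
    rw [show (1-2*α:ℝ) = -(2*α-1) by ring, div_neg]
  have hA₁pos : (0:ℝ) < (C^2*(2*α-1)) ^ (-(1/(2*α-1))) :=
    Real.rpow_pos_of_pos (by positivity) _
  set A₁ : ℝ := (C^2*(2*α-1)) ^ (-(1/(2*α-1))) with hA₁def
  have hFrate : ∀ t : ℝ, 0 < t → F t ≤ A₁ * t^(-(1/(2*α-1))) := by
    intro t ht
    rcases (hFnn t (hreg2 t ht.le)).lt_or_eq with hFt | hFt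
    · have h1 := hrate 0 t ht.le (fun u hu => hreg2 u hu.1) hFt
      have h2 : C^2*(2*α-1)*t ≤ (F t)^(1-2*α) := by
        have h0 := Real.rpow_nonneg (hFnn 0 (hreg2 0 le_rfl)) (1-2*α)
        nlinarith [h1]
      have hc₁t : (0:ℝ) < C^2*(2*α-1)*t := by positivity
      have h3 : ((F t)^(1-2*α))^(1/(1-2*α)) ≤ (C^2*(2*α-1)*t)^(1/(1-2*α)) :=
        Real.rpow_le_rpow_of_nonpos hc₁t h2
          (by rw [hexp]; exact neg_nonpos.2 (by positivity))
      have h4 : ((F t)^(1-2*α))^(1/(1-2*α)) = F t := by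
        rw [← Real.rpow_mul (hFnn t (hreg2 t ht.le)), mul_one_div,
          div_self (by nlinarith : (1-2*α:ℝ) ≠ 0), Real.rpow_one]
      have h5 : (C^2*(2*α-1)*t)^(1/(1-2*α)) = A₁ * t^(-(1/(2*α-1))) := by
        rw [Real.mul_rpow (by positivity) ht.le, hexp]
      rw [h4, h5] at h3
      exact h3
    · rw [← hFt]
      positivity
  by_cases hzero : ∃ c : ℝ, 0 ≤ c ∧ F c = 0
  · -- the flow is constant
    obtain ⟨c, hc0, hFc⟩ := hzero
    have hXc := hconstz c (hreg2 c hc0) hFc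
    have hXall : ∀ t, X t = x₀ := by
      intro t
      rw [hXc t, ← hX0, hXc 0]
    have hfx₀ : f x₀ = 0 := by
      have : F c = f x₀ := by rw [hFdef]; simp only; rw [hXall c]
      rw [← this, hFc]
    have hx₀U : x₀ ∈ U := by
      rw [← hX0]
      exact hmemU 0 (hreg2 0 le_rfl)
    refine ⟨x₀, hx₀U, hfx₀, ?_, 1, one_pos, ?_⟩
    · have : X = fun _ => x₀ := funext hXall
      rw [this]
      exact tendsto_const_nhds
    · intro t ht
      constructor
      · rw [hXall t, hfx₀, one_mul]
        positivity
      · rw [hXall t, dist_self, one_mul]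
        positivity
  · push_neg at hzero
    have hFpos : ∀ t : ℝ, 0 ≤ t → 0 < F t := fun t ht =>
      lt_of_le_of_ne (hFnn t (hreg2 t ht)) (Ne.symm (hzero t ht))
    have hc₂ : (0:ℝ) < C*(1-α) := by positivity
    have hd2 : ∀ a b : ℝ, 0 ≤ a → a ≤ b → dist (X b) (X a) ≤ (F a)^(1-α) / (C*(1-α)) := by
      intro a b ha hab
      have h := hdist a b hab (fun u hu => hreg2 u (ha.trans hu.1))
        (fun u hu => hFpos u (ha.trans hu.1)) b ⟨hab, le_refl b⟩
      rw [dist_eq_norm]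
      refine h.trans ?_
      rw [div_le_div_iff_of_pos_right hc₂]
      have := Real.rpow_nonneg (hFnn b (hreg2 b (ha.trans hab))) (1-α)
      linarith
    have hψmono : True := trivial
    have hψmono2 : ∀ N t : ℝ, 0 ≤ N → N ≤ t →
        (F t)^(1-α)/(C*(1-α)) ≤ (F N)^(1-α)/(C*(1-α)) := by
      intro N t hN hNt
      rw [div_le_div_iff_of_pos_right hc₂]
      exact Real.rpow_le_rpow (hFnn t (hreg2 t (hN.trans hNt)))
        (hmono N t hNt (fun u hu => hreg2 u (hN.trans hu.1)) N t
          ⟨le_refl N, hNt⟩ ⟨hNt, le_refl t⟩ hNt) h1α.le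
    have hF0seq : Tendsto (fun m : ℕ => F m) atTop (nhds 0) := by
      have hg : Tendsto (fun m : ℕ => A₁ * (m:ℝ)^(-(1/(2*α-1)))) atTop (nhds 0) := by
        have h1 : Tendsto (fun t : ℝ => A₁ * t^(-(1/(2*α-1)))) atTop (nhds (A₁ * 0)) :=
          (tendsto_rpow_neg_atTop (by positivity)).const_mul A₁
        rw [mul_zero] at h1
        exact h1.comp tendsto_natCast_atTop_atTop
      apply squeeze_zero'
        (Eventually.of_forall fun m : ℕ => hFnn m (hreg2 m (Nat.cast_nonneg m))) ?_ hg
      filter_upwards [eventually_ge_atTop 1] with m hm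
      have hm' : (0:ℝ) < m := by exact_mod_cast Nat.lt_of_lt_of_le Nat.zero_lt_one hm
      exact hFrate m hm'
    have hψ0 : Tendsto (fun m : ℕ => (F m)^(1-α)/(C*(1-α))) atTop (nhds 0) := by
      have h1 : Tendsto (fun m : ℕ => (F m)^(1-α)) atTop (nhds ((0:ℝ)^(1-α))) :=
        ((Real.continuousAt_rpow_const 0 (1-α) (Or.inr h1α.le)).tendsto).comp hF0seq
      rw [Real.zero_rpow (ne_of_gt h1α)] at h1
      simpa using h1.div_const (C*(1-α))
    have hcauchy : CauchySeq (fun m : ℕ => X m) := by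
      apply cauchySeq_of_le_tendsto_0 (fun m : ℕ => (F m)^(1-α)/(C*(1-α))) ?_ hψ0
      intro m m' N hm hm'
      rcases le_total m m' with h | h
      · calc dist (X m) (X m') = dist (X m') (X m) := dist_comm _ _
          _ ≤ (F m)^(1-α)/(C*(1-α)) := hd2 m m' (Nat.cast_nonneg m) (by exact_mod_cast h)
          _ ≤ (F N)^(1-α)/(C*(1-α)) :=
            hψmono2 N m (Nat.cast_nonneg N) (by exact_mod_cast hm)
      · calc dist (X m) (X m') ≤ (F m')^(1-α)/(C*(1-α)) :=
            hd2 m' m (Nat.cast_nonneg m') (by exact_mod_cast h)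
          _ ≤ (F N)^(1-α)/(C*(1-α)) :=
            hψmono2 N m' (Nat.cast_nonneg N) (by exact_mod_cast hm')
    obtain ⟨xlim, hxlim⟩ := cauchySeq_tendsto_of_complete hcauchy
    have hdlim : ∀ t : ℝ, 0 ≤ t → dist (X t) xlim ≤ (F t)^(1-α)/(C*(1-α)) := by
      intro t ht
      have h1 : Tendsto (fun m : ℕ => dist (X t) (X m)) atTop (nhds (dist (X t) xlim)) :=
        tendsto_const_nhds.dist hxlim
      apply le_of_tendsto h1
      filter_upwards [eventually_ge_atTop ⌈t⌉₊] with m hm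
      have htm : t ≤ (m:ℝ) := (Nat.le_ceil t).trans (by exact_mod_cast hm)
      rw [dist_comm]
      exact hd2 t m ht htm
    have hXtends : Tendsto X atTop (nhds xlim) := by
      rw [tendsto_iff_dist_tendsto_zero]
      have hF0real : Tendsto F atTop (nhds 0) := by
        have hg : Tendsto (fun t : ℝ => A₁ * t^(-(1/(2*α-1)))) atTop (nhds 0) := by
          have h1 : Tendsto (fun t : ℝ => A₁ * t^(-(1/(2*α-1)))) atTop (nhds (A₁ * 0)) :=
            (tendsto_rpow_neg_atTop (by positivity)).const_mul A₁
          rwa [mul_zero] at h1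
        apply squeeze_zero' ?_ ?_ hg
        · filter_upwards [eventually_ge_atTop 0] with t ht
          exact hFnn t (hreg2 t ht)
        · filter_upwards [eventually_gt_atTop 0] with t ht
          exact hFrate t ht
      have hg2 : Tendsto (fun t : ℝ => (F t)^(1-α)/(C*(1-α))) atTop (nhds 0) := by
        have h1 : Tendsto (fun t : ℝ => (F t)^(1-α)) atTop (nhds ((0:ℝ)^(1-α))) :=
          ((Real.continuousAt_rpow_const 0 (1-α) (Or.inr h1α.le)).tendsto).comp hF0real
        rw [Real.zero_rpow (ne_of_gt h1α)] at h1
        simpa using h1.div_const (C*(1-α))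
      apply squeeze_zero' (Eventually.of_forall fun t => dist_nonneg) ?_ hg2
      filter_upwards [eventually_ge_atTop 0] with t ht
      exact hdlim t ht
    have hxlimball : xlim ∈ closedBall (0:EuclideanSpace ℝ (Fin n)) (R/2) := by
      apply isClosed_closedBall.mem_of_tendsto hxlim
      filter_upwards [eventually_ge_atTop 0] with m _
      exact mem_closedBall_zero_iff.2 (hreg2 m (Nat.cast_nonneg m))
    have hxlimo : xlim ∈ interior U :=
      hRU (closedBall_subset_closedBall (by linarith) hxlimball)
    have hflim : f xlim = 0 := by
      have h1 : Tendsto (fun m : ℕ => F m) atTop (nhds (f xlim)) :=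
        ((hC2.continuousOn.continuousAt (hnhds _ hxlimo)).tendsto).comp hxlim
      exact tendsto_nhds_unique h1 hF0seq
    refine ⟨xlim, hUoU hxlimo, hflim, hXtends,
      A₁ + A₁^(1-α)/(C*(1-α)) + 1, by positivity, ?_⟩
    intro t ht
    have hrpow_t : (0:ℝ) ≤ t ^ (-(1/(2*α-1))) := Real.rpow_nonneg ht.le _
    have hrpow_t2 : (0:ℝ) ≤ t ^ (-((1-α)/(2*α-1))) := Real.rpow_nonneg ht.le _
    constructor
    · refine (hFrate t ht).trans ?_
      have hle : A₁ ≤ A₁ + A₁^(1-α)/(C*(1-α)) + 1 := by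
        have h9 : (0:ℝ) ≤ A₁^(1-α)/(C*(1-α)) := by positivity
        linarith
      exact mul_le_mul_of_nonneg_right hle hrpow_t
    · refine (hdlim t ht.le).trans ?_
      have h1 : (F t)^(1-α) ≤ (A₁ * t^(-(1/(2*α-1))))^(1-α) :=
        Real.rpow_le_rpow (hFnn t (hreg2 t ht.le)) (hFrate t ht) h1α.le
      have h2 : (A₁ * t^(-(1/(2*α-1))))^(1-α) = A₁^(1-α) * t^(-((1-α)/(2*α-1))) := by
        rw [Real.mul_rpow hA₁pos.le hrpow_t, ← Real.rpow_mul ht.le]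
        congr 1
        ring
      have h3 : (F t)^(1-α)/(C*(1-α)) ≤ A₁^(1-α) * t^(-((1-α)/(2*α-1)))/(C*(1-α)) := by
        rw [div_le_div_iff_of_pos_right hc₂, ← h2]
        exact h1
      refine h3.trans ?_
      have h4 : A₁^(1-α) * t^(-((1-α)/(2*α-1)))/(C*(1-α)) =
          (A₁^(1-α)/(C*(1-α))) * t^(-((1-α)/(2*α-1))) := by ring
      rw [h4]
      have hle : A₁^(1-α)/(C*(1-α)) ≤ A₁ + A₁^(1-α)/(C*(1-α)) + 1 := by
        have := hA₁pos
        linarith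
      exact mul_le_mul_of_nonneg_right hle hrpow_t2
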